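/- arXiv:math/0504473 — 6 statements merged into one kernel-verified Lean document; each statement's English description precedes it below -/
import Mathlib

section
/- Let n ≥ 1, let f : ℝⁿ → ℝⁿ be a Lipschitz map, and let A ⊆ ℝⁿ be a measurable set. Then ∫⁻_{A} |det Df(x)| dvol(x) ≥ ∫⁻_{ℝⁿ} card(A ∩ f⁻¹({y})) dvol(y), where card denotes the extended-natural-number cardinality of a set (valued in [0,∞]) and the integrals are lower Lebesgue integrals valued in [0,∞]. -/
open MeasureTheory Set Filter
open scoped NNReal ENNReal

lemma floor_sep {a b : ℝ} (h : a < b) :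
    ∃ N : ℕ, ∀ k ≥ N, ⌊(2:ℝ)^k * a⌋ ≠ ⌊(2:ℝ)^k * b⌋ := by
  obtain ⟨N, hN⟩ := pow_unbounded_of_one_lt ((b - a)⁻¹) (one_lt_two (α := ℝ))
  refine ⟨N, fun k hk => ?_⟩
  have hba : (0:ℝ) < b - a := by linarith
  have h2 : (b - a)⁻¹ < 2 ^ k := hN.trans_le (pow_le_pow_right₀ one_le_two hk)
  have h1 : (1:ℝ) ≤ 2 ^ k * (b - a) := by
    rw [inv_lt_iff_one_lt_mul₀ hba] at h2
    nlinarith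
  have h3 : (2:ℝ)^k * a + 1 ≤ 2^k * b := by nlinarith
  have h4 : ⌊(2:ℝ)^k * a⌋ + 1 ≤ ⌊(2:ℝ)^k * b⌋ := by
    have := Int.floor_le_floor (R := ℝ) h3
    rwa [Int.floor_add_one] at this
  omega

lemma lipschitz_image_null {n : ℕ} (hn : 1 ≤ n)
    {f : EuclideanSpace ℝ (Fin n) → EuclideanSpace ℝ (Fin n)}
    {K : NNReal} (hf : LipschitzWith K f) {s : Set (EuclideanSpace ℝ (Fin n))}
    (hs : volume s = 0) : volume (f '' s) = 0 := by
  haveI : Nonempty (Fin n) := ⟨⟨0, hn⟩⟩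
  set e := (MeasurableEquiv.toLp 2 (Fin n → ℝ)).symm with he
  have hmp := EuclideanSpace.volume_preserving_symm_measurableEquiv_toLp (Fin n)
  have key : ∀ t : Set (Fin n → ℝ), volume t = volume (e ⁻¹' t) := fun t => by
    rw [← hmp.map_eq, MeasurableEquiv.map_apply]
  have hle : LipschitzWith 1 (⇑e) := by
    rw [he, MeasurableEquiv.coe_toLp_symm]
    exact PiLp.lipschitzWith_ofLp 2 _
  have hles : LipschitzWith ((Fintype.card (Fin n) : ℝ≥0) ^ (1 / (2:ℝ≥0∞)).toReal) (⇑e.symm) := by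
    rw [he, MeasurableEquiv.symm_symm, MeasurableEquiv.coe_toLp]
    exact PiLp.lipschitzWith_toLp 2 _
  set L := (1 : ℝ≥0) * (K * (Fintype.card (Fin n) : ℝ≥0) ^ (1 / (2:ℝ≥0∞)).toReal) with hL
  have hg : LipschitzWith L (⇑e ∘ f ∘ ⇑e.symm) := hle.comp (hf.comp hles)
  have hH : (μH[(n:ℝ)] : Measure (Fin n → ℝ)) = volume := by
    rw [← MeasureTheory.hausdorffMeasure_pi_real (ι := Fin n), Fintype.card_fin]
  -- volume of e '' s is zero
  have hes : volume (e '' s) = 0 := by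
    rw [key (e '' s), Set.preimage_image_eq s e.injective]; exact hs
  have himg : (⇑e ∘ f ∘ ⇑e.symm) '' (e '' s) = e '' (f '' s) := by
    rw [← Set.image_comp, ← Set.image_comp]
    congr 1
  have hmu : volume (e '' (f '' s)) = 0 := by
    rw [← himg, ← hH]
    refine le_antisymm ?_ zero_le
    calc μH[(n:ℝ)] ((⇑e ∘ f ∘ ⇑e.symm) '' (e '' s))
        ≤ (L : ℝ≥0∞) ^ (n:ℝ) * μH[(n:ℝ)] (e '' s) :=
          hg.hausdorffMeasure_image_le (by positivity) _
      _ = 0 := by rw [hH, hes, mul_zero]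
  rw [key (e '' (f '' s)), Set.preimage_image_eq _ e.injective] at hmu
  exact hmu


lemma aux_encard_le {n : ℕ}
    (f : EuclideanSpace ℝ (Fin n) → EuclideanSpace ℝ (Fin n))
    {s : Set (EuclideanSpace ℝ (Fin n))} (hsm : MeasurableSet s)
    (hd : ∀ x ∈ s, DifferentiableAt ℝ f x) :
    ∫⁻ y, ((s ∩ f ⁻¹' {y}).encard : ℝ≥0∞) ∂volume ≤
      ∫⁻ x in s, ENNReal.ofReal |(fderiv ℝ f x).det| ∂volume := by
  classical
  -- dyadic index maps
  set c : ℕ → EuclideanSpace ℝ (Fin n) → (Fin n → ℤ) :=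
    fun k x i => ⌊(2:ℝ)^k * x i⌋ with hc
  have hcm : ∀ k, Measurable (c k) := by
    intro k
    refine measurable_pi_lambda _ fun i => Measurable.floor ?_
    exact measurable_const.mul (((measurable_pi_apply i).comp (MeasurableEquiv.toLp 2 (Fin n → ℝ)).symm.measurable :
      Measurable fun x : EuclideanSpace ℝ (Fin n) => x i))
  -- pieces
  set piece : ℕ → (Fin n → ℤ) → Set (EuclideanSpace ℝ (Fin n)) :=
    fun k j => s ∩ c k ⁻¹' {j} with hpiece
  have hpm : ∀ k j, MeasurableSet (piece k j) :=
    fun k j => hsm.inter ((hcm k) (measurableSet_singleton j))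
  have hpd : ∀ k, Pairwise (Function.onFun Disjoint (piece k)) := by
    intro k j j' hne
    simp only [Function.onFun, Set.disjoint_left]
    rintro x ⟨-, hx⟩ ⟨-, hx'⟩
    exact hne (hx.symm.trans hx')
  have hpu : ∀ k, (⋃ j, piece k j) = s := by
    intro k
    ext x
    simp [hpiece]
  -- measurable hulls of images
  set T : ℕ → (Fin n → ℤ) → Set (EuclideanSpace ℝ (Fin n)) :=
    fun k j => toMeasurable volume (f '' piece k j) with hT
  set g : ℕ → EuclideanSpace ℝ (Fin n) → ℝ≥0∞ :=
    fun k y => ∑' j : Fin n → ℤ, (T k j).indicator (1 : EuclideanSpace ℝ (Fin n) → ℝ≥0∞) y with hg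
  have hgm : ∀ k, Measurable (g k) := by
    intro k
    exact Measurable.ennreal_tsum fun j =>
      (measurable_one.indicator (measurableSet_toMeasurable _ _))
  -- integral bound for each k
  have hbound : ∀ k, ∫⁻ y, g k y ∂volume ≤
      ∫⁻ x in s, ENNReal.ofReal |(fderiv ℝ f x).det| ∂volume := by
    intro k
    have h1 : ∫⁻ y, g k y ∂volume = ∑' j, volume (T k j) := by
      rw [hg]
      rw [lintegral_tsum fun j =>
        (measurable_one.indicator (measurableSet_toMeasurable _ _)).aemeasurable]
      congr 1
      ext j
      rw [lintegral_indicator_one (measurableSet_toMeasurable _ _)]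
    rw [h1]
    have h2 : ∀ j, volume (T k j) ≤
        ∫⁻ x in piece k j, ENNReal.ofReal |(fderiv ℝ f x).det| ∂volume := by
      intro j
      rw [hT]
      rw [measure_toMeasurable]
      exact addHaar_image_le_lintegral_abs_det_fderiv volume (hpm k j)
        (fun x hx => ((hd x hx.1).hasFDerivAt).hasFDerivWithinAt)
    calc ∑' j, volume (T k j)
        ≤ ∑' j, ∫⁻ x in piece k j, ENNReal.ofReal |(fderiv ℝ f x).det| ∂volume :=
          ENNReal.tsum_le_tsum h2
      _ = ∫⁻ x in ⋃ j, piece k j, ENNReal.ofReal |(fderiv ℝ f x).det| ∂volume :=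
          (lintegral_iUnion (hpm k) (hpd k) _).symm
      _ = _ := by rw [hpu k]
  -- pointwise bound
  have hpoint : ∀ y, ((s ∩ f ⁻¹' {y}).encard : ℝ≥0∞) ≤
      liminf (fun k => g k y) atTop := by
    intro y
    have key : ∀ F : Finset (EuclideanSpace ℝ (Fin n)),
        ↑F ⊆ s ∩ f ⁻¹' {y} → (F.card : ℝ≥0∞) ≤ liminf (fun k => g k y) atTop := by
      intro F hF
      -- separate points of F eventually
      have hsep : ∀ x ∈ F, ∀ x' ∈ F, x ≠ x' →
          ∃ N : ℕ, ∀ k ≥ N, c k x ≠ c k x' := by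
        intro x _ x' _ hne
        have : ∃ i, x i ≠ x' i := by
          by_contra h
          push_neg at h
          exact hne (WithLp.ofLp_injective 2 (funext h))
        obtain ⟨i, hi⟩ := this
        rcases lt_or_gt_of_ne hi with h | h
        · obtain ⟨N, hN⟩ := floor_sep h
          exact ⟨N, fun k hk hcc => hN k hk (congrFun hcc i)⟩
        · obtain ⟨N, hN⟩ := floor_sep h
          exact ⟨N, fun k hk hcc => hN k hk (congrFun hcc i).symm⟩
      choose! N hN using hsep
      set K₀ := F.sup (fun x => F.sup (N x)) with hK₀
      have hinj : ∀ k ≥ K₀, Set.InjOn (c k) ↑F := by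
        intro k hk x hx x' hx' hcc
        by_contra hne
        refine hN x hx x' hx' hne k (le_trans ?_ hk) hcc
        exact le_trans (Finset.le_sup (f := N x) hx') (Finset.le_sup (f := fun x => F.sup (N x)) hx)
      -- for k ≥ K₀, g k y ≥ F.card
      have hcard : ∀ k ≥ K₀, (F.card : ℝ≥0∞) ≤ g k y := by
        intro k hk
        have h1 : ∀ j ∈ F.image (c k), (T k j).indicator (1 : EuclideanSpace ℝ (Fin n) → ℝ≥0∞) y = 1 := by
          intro j hj
          obtain ⟨x, hx, rfl⟩ := Finset.mem_image.mp hj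
          have hx' := hF hx
          have : y ∈ T k (c k x) := by
            apply subset_toMeasurable
            exact ⟨x, ⟨hx'.1, rfl⟩, hx'.2⟩
          simp [Set.indicator_of_mem this]
        calc (F.card : ℝ≥0∞) = ∑ j ∈ F.image (c k), (T k j).indicator (1 : EuclideanSpace ℝ (Fin n) → ℝ≥0∞) y := by
              rw [Finset.sum_congr rfl h1]
              simp [Finset.card_image_of_injOn (hinj k hk)]
          _ ≤ g k y := ENNReal.sum_le_tsum _
      rw [liminf_eq_iSup_iInf_of_nat]
      refine le_iSup_of_le K₀ ?_
      exact le_iInf₂ fun k hk => hcard k hk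
    rcases (s ∩ f ⁻¹' {y}).finite_or_infinite with hfin | hinf
    · rw [hfin.encard_eq_coe_toFinset_card]
      have := key hfin.toFinset (by simp)
      simpa using this
    · rw [hinf.encard_eq]
      rw [show (((⊤ : ℕ∞) : ℝ≥0∞)) = ⊤ from rfl, ← ENNReal.iSup_natCast]
      refine iSup_le fun m => ?_
      obtain ⟨t, hts, htf, htc⟩ := hinf.exists_subset_ncard_eq m
      have := key htf.toFinset (by simpa using hts)
      rwa [show htf.toFinset.card = m by rw [← htc, Set.ncard_eq_toFinset_card _ htf]] at this
  calc ∫⁻ y, ((s ∩ f ⁻¹' {y}).encard : ℝ≥0∞) ∂volume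
      ≤ ∫⁻ y, liminf (fun k => g k y) atTop ∂volume := lintegral_mono hpoint
    _ ≤ liminf (fun k => ∫⁻ y, g k y ∂volume) atTop := lintegral_liminf_le hgm
    _ ≤ ∫⁻ x in s, ENNReal.ofReal |(fderiv ℝ f x).det| ∂volume := by
        rw [liminf_eq_iSup_iInf_of_nat]
        exact iSup_le fun m => le_trans (iInf₂_le m le_rfl) (hbound m)


/-- Change-of-variables inequality for Lipschitz maps (area formula inequality):
the integral of the absolute Jacobian over a measurable set `A` dominates the
integral of the counting function of fibers over `A`. -/
theorem lintegral_abs_det_fderiv_ge_lintegral_encard_fiber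
    (n : ℕ) (hn : 1 ≤ n)
    (f : EuclideanSpace ℝ (Fin n) → EuclideanSpace ℝ (Fin n))
    (K : NNReal) (hf : LipschitzWith K f)
    (A : Set (EuclideanSpace ℝ (Fin n))) (hA : MeasurableSet A) :
    ∫⁻ y, ((A ∩ f ⁻¹' {y}).encard : ENNReal) ∂volume ≤
      ∫⁻ x in A, ENNReal.ofReal |(fderiv ℝ f x).det| ∂volume := by
  have hD : MeasurableSet {x : EuclideanSpace ℝ (Fin n) | DifferentiableAt ℝ f x} :=
    measurableSet_of_differentiableAt ℝ f
  set s := A ∩ {x | DifferentiableAt ℝ f x} with hs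
  have hsm : MeasurableSet s := hA.inter hD
  have hnull : volume (A \ s) = 0 := by
    have hae : ∀ᵐ x : EuclideanSpace ℝ (Fin n) ∂volume, DifferentiableAt ℝ f x :=
      hf.ae_differentiableAt
    rw [ae_iff] at hae
    refine measure_mono_null ?_ hae
    intro x hx
    exact fun h => hx.2 ⟨hx.1, h⟩
  have hN : volume (toMeasurable volume (f '' (A \ s))) = 0 := by
    rw [measure_toMeasurable]
    exact lipschitz_image_null hn hf hnull
  have hae2 : ∀ᵐ y : EuclideanSpace ℝ (Fin n) ∂volume,
      ((A ∩ f ⁻¹' {y}).encard : ℝ≥0∞) ≤ ((s ∩ f ⁻¹' {y}).encard : ℝ≥0∞) := by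
    have : ∀ᵐ y : EuclideanSpace ℝ (Fin n) ∂volume,
        y ∉ toMeasurable volume (f '' (A \ s)) := by
      rw [← measure_eq_zero_iff_ae_notMem]; exact hN
    filter_upwards [this] with y hy
    have heq : A ∩ f ⁻¹' {y} = s ∩ f ⁻¹' {y} := by
      refine subset_antisymm ?_ (inter_subset_inter_left _ inter_subset_left)
      rintro x ⟨hxA, hxy⟩
      by_cases hxs : x ∈ s
      · exact ⟨hxs, hxy⟩
      · have hmem : y ∈ f '' (A \ s) := ⟨x, ⟨hxA, hxs⟩, hxy⟩
        exact absurd (subset_toMeasurable _ _ hmem) hy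
    rw [heq]
  calc ∫⁻ y, ((A ∩ f ⁻¹' {y}).encard : ℝ≥0∞) ∂volume
      ≤ ∫⁻ y, ((s ∩ f ⁻¹' {y}).encard : ℝ≥0∞) ∂volume := lintegral_mono_ae hae2
    _ ≤ ∫⁻ x in s, ENNReal.ofReal |(fderiv ℝ f x).det| ∂volume :=
        aux_encard_le f hsm (fun x hx => hx.2)
    _ ≤ ∫⁻ x in A, ENNReal.ofReal |(fderiv ℝ f x).det| ∂volume :=
        lintegral_mono_set inter_subset_left
end

section
/- Let X be a Hausdorff topological space, Y a topological space equipped with a Borel measure μ that is positive on every nonempty open set, and let f : X → Y be an open map. If the set of points y ∈ Y that have at least two distinct preimages under f (i.e. {y | ∃ x₁ x₂, x₁ ≠ x₂ ∧ f x₁ = y ∧ f x₂ = y}) has μ-measure zero, then f is injective. -/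
open MeasureTheory

/-- An open map from a Hausdorff space to a space with a Borel measure that is positive on
nonempty open sets, whose set of points with at least two preimages is null, is injective. -/
theorem openMap_injective_of_null_double_points
    {X Y : Type*} [TopologicalSpace X] [T2Space X] [TopologicalSpace Y]
    [MeasurableSpace Y] [BorelSpace Y] (μ : Measure Y)
    (hμ : ∀ V : Set Y, IsOpen V → V.Nonempty → 0 < μ V)
    (f : X → Y) (hf : IsOpenMap f)
    (hnull : μ {y : Y | ∃ x₁ x₂ : X, x₁ ≠ x₂ ∧ f x₁ = y ∧ f x₂ = y} = 0) :
    Function.Injective f := by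
  intro a b hab
  by_contra hne
  obtain ⟨U, V, hU, hV, haU, hbV, hUV⟩ := t2_separation hne
  set W := f '' U ∩ f '' V with hW
  have hWopen : IsOpen W := (hf U hU).inter (hf V hV)
  have hWne : W.Nonempty := ⟨f a, ⟨a, haU, rfl⟩, ⟨b, hbV, hab.symm⟩⟩
  have hsub : W ⊆ {y : Y | ∃ x₁ x₂ : X, x₁ ≠ x₂ ∧ f x₁ = y ∧ f x₂ = y} := by
    rintro y ⟨⟨x₁, hx₁, rfl⟩, ⟨x₂, hx₂, hx₂'⟩⟩
    exact ⟨x₁, x₂, fun h => hUV.ne_of_mem hx₁ hx₂ h, rfl, hx₂'⟩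
  have := (hμ W hWopen hWne).trans_le (measure_mono hsub)
  rw [hnull] at this
  exact lt_irrefl _ this
end

section
/- Let n, m ≥ 1, let U ⊆ ℝⁿ be an open convex set, and let f : U → ℝᵐ be a locally Lipschitz map such that for almost every x ∈ U, f is differentiable at x and the operator norm of its derivative satisfies ‖Df(x)‖ ≤ 1. Then f is 1-Lipschitz on U: ‖f(x) − f(y)‖ ≤ ‖x − y‖ for all x, y ∈ U. -/
open MeasureTheory Set Metric

lemma oneD {F : Type*} [NormedAddCommGroup F] [NormedSpace ℝ F]
    (g : ℝ → F) (K c ε : ℝ) (hK : 0 ≤ K) (hc : 0 ≤ c) (hε : 0 < ε)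
    (hg : ContinuousOn g (Icc 0 1))
    (hloc : ∀ b ∈ Icc (0:ℝ) 1, ∀ᶠ t in nhds b, ‖g t - g b‖ ≤ K * |t - b|)
    (O : Set ℝ) (hO : IsOpen O)
    (hd : ∀ t ∈ Icc (0:ℝ) 1, t ∉ O → ∃ d : F, HasDerivAt g d t ∧ ‖d‖ ≤ c) :
    ‖g 1 - g 0‖ ≤ (c + ε) + (K + c + ε) * (volume (O ∩ Ioc 0 1)).toReal := by
  set M : ℝ → ℝ := fun t => (volume (O ∩ Ioc 0 t)).toReal with hM
  have hfin : ∀ t : ℝ, volume (O ∩ Ioc 0 t) ≠ ⊤ := fun t =>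
    ((measure_mono (inter_subset_right)).trans_lt (by simp [Real.volume_Ioc])).ne
  have hMmono : ∀ s t : ℝ, s ≤ t → M s ≤ M t := by
    intro s t hst
    exact ENNReal.toReal_le_toReal (hfin s) (hfin t) |>.mpr
      (measure_mono (inter_subset_inter_right _ (Ioc_subset_Ioc_right hst)))
  have hMadd : ∀ s t : ℝ, s ≤ t → M t ≤ M s + (t - s) := by
    intro s t hst
    have h1 : O ∩ Ioc 0 t ⊆ (O ∩ Ioc 0 s) ∪ Ioc s t := by
      intro u ⟨huO, hu0, hut⟩
      rcases le_or_gt u s with h | h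
      · exact Or.inl ⟨huO, hu0, h⟩
      · exact Or.inr ⟨h, hut⟩
    have h2 : volume (O ∩ Ioc 0 t) ≤ volume (O ∩ Ioc 0 s) + volume (Ioc s t) :=
      (measure_mono h1).trans (measure_union_le _ _)
    have h3 := ENNReal.toReal_le_toReal (hfin t)
      (by simp [ENNReal.add_ne_top, hfin s, Real.volume_Ioc]) |>.mpr h2
    rw [ENNReal.toReal_add (hfin s) (by simp [Real.volume_Ioc]), Real.volume_Ioc,
      ENNReal.toReal_ofReal (by linarith)] at h3
    exact h3
  have hMfull : ∀ s t : ℝ, 0 ≤ s → s ≤ t → Ioc s t ⊆ O → M s + (t - s) ≤ M t := by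
    intro s t h0 hst hsub
    have h1 : (O ∩ Ioc 0 s) ∪ Ioc s t ⊆ O ∩ Ioc 0 t := by
      rintro u (⟨huO, hu0, hus⟩ | hu)
      · exact ⟨huO, hu0, hus.trans hst⟩
      · exact ⟨hsub hu, lt_of_le_of_lt h0 hu.1, hu.2⟩
    have hdisj : Disjoint (O ∩ Ioc 0 s) (Ioc s t) := by
      apply Set.disjoint_left.mpr
      rintro u ⟨_, _, hus⟩ ⟨hsu, _⟩
      exact absurd hus (not_le.mpr hsu)
    have h2 : volume (O ∩ Ioc 0 s) + volume (Ioc s t) ≤ volume (O ∩ Ioc 0 t) := by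
      rw [← measure_union hdisj measurableSet_Ioc]
      exact measure_mono h1
    have h3 := ENNReal.toReal_le_toReal
      (by simp [ENNReal.add_ne_top, hfin s, Real.volume_Ioc]) (hfin t) |>.mpr h2
    rw [ENNReal.toReal_add (hfin s) (by simp [Real.volume_Ioc]), Real.volume_Ioc,
      ENNReal.toReal_ofReal (by linarith)] at h3
    exact h3
  have hMcont : ContinuousOn M (Icc 0 1) := by
    apply LipschitzOnWith.continuousOn (K := 1) (s := Icc 0 1)
    apply LipschitzOnWith.of_dist_le_mul
    intro s _ t _
    rw [Real.dist_eq, Real.dist_eq, NNReal.coe_one, one_mul]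
    rcases le_total s t with h | h
    · rw [abs_of_nonpos (by linarith [hMmono s t h]), abs_of_nonpos (by linarith)]
      linarith [hMadd s t h]
    · rw [abs_of_nonneg (by linarith [hMmono t s h]), abs_of_nonneg (by linarith)]
      linarith [hMadd t s h]
  have hM0 : M 0 = 0 := by simp [hM]
  set T : Set ℝ := {t | t ∈ Icc (0:ℝ) 1 ∧ ‖g t - g 0‖ ≤ (c + ε) * t + (K + c + ε) * M t} with hT
  have h0T : (0:ℝ) ∈ T := by
    constructor
    · exact ⟨le_refl 0, zero_le_one⟩
    · simp [hM0]
  have hTbdd : BddAbove T := ⟨1, fun t ht => ht.1.2⟩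
  have hTclosed : IsClosed T := by
    have : T = Icc 0 1 ∩ (fun t => ‖g t - g 0‖ - ((c + ε) * t + (K + c + ε) * M t)) ⁻¹' Iic 0 := by
      ext t
      simp only [hT, mem_setOf_eq, mem_inter_iff, mem_preimage, mem_Iic]
      constructor
      · rintro ⟨h1, h2⟩; exact ⟨h1, by linarith⟩
      · rintro ⟨h1, h2⟩; exact ⟨h1, by linarith⟩
    rw [this]
    apply ContinuousOn.preimage_isClosed_of_isClosed _ isClosed_Icc isClosed_Iic
    apply ContinuousOn.sub
    · exact ((hg.sub continuousOn_const).norm)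
    · exact (continuousOn_const.mul continuousOn_id).add (continuousOn_const.mul hMcont)
  set b := sSup T with hb
  have hbT : b ∈ T := hTclosed.csSup_mem ⟨0, h0T⟩ hTbdd
  have hbI : b ∈ Icc (0:ℝ) 1 := hbT.1
  have hb1 : b = 1 := by
    by_contra hne
    have hblt : b < 1 := lt_of_le_of_ne hbI.2 hne
    -- find t ∈ T with t > b, contradiction
    have key : ∃ t ∈ T, b < t := by
      by_cases hbO : b ∈ O
      · obtain ⟨δ, hδ, hball⟩ := Metric.isOpen_iff.mp hO b hbO
        obtain ⟨δ2, hδ2, hloc2⟩ := Metric.eventually_nhds_iff.mp (hloc b hbI)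
        set t := min 1 (b + min δ δ2 / 2) with ht
        have hmin : 0 < min δ δ2 := lt_min hδ hδ2
        have hbt : b < t := lt_min hblt (by linarith)
        have ht1 : t ≤ 1 := min_le_left _ _
        have htb2 : t - b ≤ min δ δ2 / 2 := by
          have : t ≤ b + min δ δ2 / 2 := min_le_right _ _
          linarith
        have hIoc : Ioc b t ⊆ O := by
          intro u hu
          apply hball
          rw [Metric.mem_ball, Real.dist_eq, abs_of_pos (by linarith [hu.1])]
          have := hu.2
          have h1 : min δ δ2 ≤ δ := min_le_left _ _
          linarith
        have hgt : ‖g t - g b‖ ≤ K * (t - b) := by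
          have := hloc2 (y := t) (by
            rw [Real.dist_eq, abs_of_pos (by linarith)]
            have : min δ δ2 ≤ δ2 := min_le_right _ _
            linarith)
          rwa [abs_of_pos (by linarith)] at this
        refine ⟨t, ⟨⟨by linarith [hbI.1], ht1⟩, ?_⟩, hbt⟩
        have hMge : M b + (t - b) ≤ M t := hMfull b t hbI.1 hbt.le hIoc
        calc ‖g t - g 0‖ ≤ ‖g t - g b‖ + ‖g b - g 0‖ := norm_sub_le_norm_sub_add_norm_sub _ _ _
          _ ≤ K * (t - b) + ((c + ε) * b + (K + c + ε) * M b) := add_le_add hgt hbT.2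
          _ ≤ (c + ε) * t + (K + c + ε) * M t := by nlinarith [hMge, hbt.le]
      · obtain ⟨d, hder, hdnorm⟩ := hd b hbI hbO
        have hlo := (hasDerivAt_iff_isLittleO.mp hder).def hε
        obtain ⟨δ, hδ, hloc2⟩ := Metric.eventually_nhds_iff.mp hlo
        set t := min 1 (b + δ / 2) with ht
        have hbt : b < t := lt_min hblt (by linarith)
        have ht1 : t ≤ 1 := min_le_left _ _
        have htb2 : t - b ≤ δ / 2 := by
          have : t ≤ b + δ / 2 := min_le_right _ _
          linarith
        have hgt : ‖g t - g b‖ ≤ (c + ε) * (t - b) := by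
          have h1 := hloc2 (y := t) (by rw [Real.dist_eq, abs_of_pos (by linarith)]; linarith)
          have h2 : ‖g t - g b‖ ≤ ‖g t - g b - (t - b) • d‖ + ‖(t - b) • d‖ := by
            have := norm_add_le (g t - g b - (t - b) • d) ((t - b) • d)
            simpa using this
          have h3 : ‖(t - b) • d‖ ≤ (t - b) * c := by
            rw [norm_smul, Real.norm_eq_abs, abs_of_pos (by linarith)]
            exact mul_le_mul_of_nonneg_left hdnorm (by linarith)
          have h4 : ‖t - b‖ = t - b := by rw [Real.norm_eq_abs, abs_of_pos (by linarith)]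
          rw [h4] at h1
          nlinarith
        refine ⟨t, ⟨⟨by linarith [hbI.1], ht1⟩, ?_⟩, hbt⟩
        have hMge : M b ≤ M t := hMmono b t hbt.le
        calc ‖g t - g 0‖ ≤ ‖g t - g b‖ + ‖g b - g 0‖ := norm_sub_le_norm_sub_add_norm_sub _ _ _
          _ ≤ (c + ε) * (t - b) + ((c + ε) * b + (K + c + ε) * M b) := add_le_add hgt hbT.2
          _ ≤ (c + ε) * t + (K + c + ε) * M t := by nlinarith [hbt.le]
    obtain ⟨t, htT, hbt⟩ := key
    exact absurd (le_csSup hTbdd htT) (not_le.mpr hbt)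
  have := hbT.2
  rw [hb1] at this
  calc ‖g 1 - g 0‖ ≤ (c + ε) * 1 + (K + c + ε) * M 1 := this
    _ = (c + ε) + (K + c + ε) * (volume (O ∩ Ioc 0 1)).toReal := by simp only [hM]; ring

lemma exists_uniform_lip {E F : Type*} [NormedAddCommGroup E] [NormedAddCommGroup F]
    (U : Set E) (f : E → F)
    (hlip : ∀ x ∈ U, ∃ K : NNReal, ∃ t ∈ nhds x, t ⊆ U ∧ LipschitzOnWith K f t)
    (S : Set E) (hS : IsCompact S) (hSU : S ⊆ U) (hSne : S.Nonempty) :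
    ∃ (K : NNReal) (r : ℝ), 0 < r ∧ ∀ q : E, (∃ p ∈ S, dist q p < r) →
      ball q r ⊆ U ∧ LipschitzOnWith K f (ball q r) := by
  have H : ∀ p ∈ S, ∃ (Kp : NNReal) (rp : ℝ), 0 < rp ∧ ball p (3 * rp) ⊆ U ∧
      LipschitzOnWith Kp f (ball p (3 * rp)) := by
    intro p hp
    obtain ⟨Kp, t, ht, htU, hlipt⟩ := hlip p (hSU hp)
    obtain ⟨e, he, hball⟩ := Metric.mem_nhds_iff.mp ht
    exact ⟨Kp, e / 3, by linarith, by
      have : ball p (3 * (e / 3)) ⊆ t := by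
        rw [show 3 * (e / 3) = e by ring]; exact hball
      exact ⟨this.trans htU, hlipt.mono this⟩⟩
  choose! Kf rf hrf hsubU hlipf using H
  have hcov : S ⊆ ⋃ p ∈ S, ball p (rf p) := by
    intro p hp
    exact mem_biUnion hp (mem_ball_self (hrf p hp))
  obtain ⟨b, hbS, hbfin, hcov'⟩ := hS.elim_finite_subcover_image
    (fun p _ => isOpen_ball) hcov
  have hbne : b.Nonempty := by
    obtain ⟨s, hs⟩ := hSne
    obtain ⟨_, ⟨p, hp, rfl⟩, _, ⟨hpb, rfl⟩, hsp⟩ := hcov' hs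
    exact ⟨p, hpb⟩
  set bF := hbfin.toFinset with hbF
  have hbFne : bF.Nonempty := by
    rwa [hbF, Set.Finite.toFinset_nonempty]
  set K : NNReal := bF.sup' hbFne Kf with hK
  set r : ℝ := bF.inf' hbFne rf with hr
  have hrpos : 0 < r := by
    rw [hr]
    rw [Finset.lt_inf'_iff]
    intro p hp
    exact hrf p (hbS (hbfin.mem_toFinset.mp hp))
  refine ⟨K, r, hrpos, fun q ⟨s, hsS, hqs⟩ => ?_⟩
  obtain ⟨_, ⟨p, hp, rfl⟩, _, ⟨hpb, rfl⟩, hsp⟩ := hcov' hsS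
  have hpF : p ∈ bF := hbfin.mem_toFinset.mpr hpb
  have hrle : r ≤ rf p := Finset.inf'_le _ hpF
  have hKle : Kf p ≤ K := Finset.le_sup' _ hpF
  have hsub : ball q r ⊆ ball p (3 * rf p) := by
    intro w hw
    rw [mem_ball] at hw hsp ⊢
    calc dist w p ≤ dist w q + dist q s + dist s p := dist_triangle4 w q s p
      _ < r + r + rf p := by
          have := dist_triangle q s p
          gcongr
      _ ≤ 3 * rf p := by linarith
  have hpS := hbS hpb
  exact ⟨hsub.trans (hsubU p hpS), fun a ha b hb => le_trans (((hlipf p hpS).mono hsub) ha hb) (mul_le_mul_left (by exact_mod_cast hKle) _)⟩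

set_option maxHeartbeats 2000000 in
/-- A locally Lipschitz map on an open convex set `U ⊆ ℝⁿ` whose derivative has operator
norm at most `1` almost everywhere is `1`-Lipschitz on `U`. -/
theorem lipschitz_of_ae_fderiv_norm_le_one
    (n m : ℕ) (hn : 1 ≤ n) (hm : 1 ≤ m)
    (U : Set (EuclideanSpace ℝ (Fin n))) (hU : IsOpen U) (hUconv : Convex ℝ U)
    (f : EuclideanSpace ℝ (Fin n) → EuclideanSpace ℝ (Fin m))
    (hlip : ∀ x ∈ U, ∃ K : NNReal, ∃ t ∈ nhds x, t ⊆ U ∧ LipschitzOnWith K f t)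
    (hder : ∀ᵐ x ∂(volume.restrict U),
      DifferentiableAt ℝ f x ∧ ‖fderiv ℝ f x‖ ≤ 1) :
    ∀ x ∈ U, ∀ y ∈ U, ‖f x - f y‖ ≤ ‖x - y‖ := by
  intro x hx y hy
  rcases eq_or_ne x y with rfl | hxy
  · simp
  set v : EuclideanSpace ℝ (Fin n) := y - x with hv
  set S : Set (EuclideanSpace ℝ (Fin n)) := segment ℝ x y with hS
  have hScompact : IsCompact S := by
    rw [hS, segment_eq_image']
    exact isCompact_Icc.image (by fun_prop)
  have hSU : S ⊆ U := hUconv.segment_subset hx hy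
  obtain ⟨K, r, hr, hcov⟩ := exists_uniform_lip U f hlip S hScompact hSU
    ⟨x, left_mem_segment ℝ x y⟩
  -- the null set of bad points
  have hN : volume ({p : EuclideanSpace ℝ (Fin n) | ¬(DifferentiableAt ℝ f p ∧ ‖fderiv ℝ f p‖ ≤ 1)} ∩ U) = 0 := by
    rw [ae_iff] at hder
    rwa [Measure.restrict_apply' hU.measurableSet] at hder
  obtain ⟨N', hNN', hN'meas, hN'0⟩ := exists_measurable_superset_of_null hN
  -- Fubini: almost every translate line meets N' in a null set
  have hgood : ∀ᵐ z ∂(volume : Measure (EuclideanSpace ℝ (Fin n))),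
      volume {t : ℝ | t ∈ Ioc (0:ℝ) 1 ∧ z + t • v ∈ N'} = 0 := by
    set A : Set (EuclideanSpace ℝ (Fin n) × ℝ) := {p | p.2 ∈ Ioc (0:ℝ) 1 ∧ p.1 + p.2 • v ∈ N'} with hA
    have hmap : Measurable (fun p : EuclideanSpace ℝ (Fin n) × ℝ => p.1 + p.2 • v) :=
      measurable_fst.add (measurable_snd.smul_const v)
    have hAmeas : MeasurableSet A :=
      (measurable_snd measurableSet_Ioc).inter (hmap hN'meas)
    set B : Set (ℝ × EuclideanSpace ℝ (Fin n)) := Prod.swap ⁻¹' A with hB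
    have hBmeas : MeasurableSet B := hAmeas.preimage measurable_swap
    have hslice : ∀ t : ℝ, volume (Prod.mk t ⁻¹' B) = 0 := by
      intro t
      by_cases ht : t ∈ Ioc (0:ℝ) 1
      · have : Prod.mk t ⁻¹' B = (· + t • v) ⁻¹' N' := by
          ext z
          constructor
          · rintro ⟨_, h⟩; exact h
          · intro h; exact ⟨ht, h⟩
        rw [this, measure_preimage_add_right]
        exact hN'0
      · have : Prod.mk t ⁻¹' B = ∅ := by
          ext z
          simp only [Set.mem_empty_iff_false, iff_false]
          rintro ⟨h, _⟩
          exact ht h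
        simp [this]
    have hB0 : (volume.prod volume) B = 0 := by
      rw [Measure.prod_apply hBmeas]
      simp [hslice]
    have hA0 : (volume.prod volume) A = 0 := by
      calc (volume.prod volume) A
          = Measure.map Prod.swap ((volume : Measure ℝ).prod volume) A := by
            rw [Measure.prod_swap]
        _ = (volume.prod volume) (Prod.swap ⁻¹' A) :=
            Measure.map_apply measurable_swap hAmeas
        _ = 0 := hB0
    have := Measure.measure_ae_null_of_prod_null hA0
    filter_upwards [this] with z hz
    have : Prod.mk z ⁻¹' A = {t : ℝ | t ∈ Ioc (0:ℝ) 1 ∧ z + t • v ∈ N'} := rfl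
    rw [← this]
    exact hz
  -- main estimate
  have main : ∀ ε > 0, ‖f x - f y‖ ≤ ‖x - y‖ + ε := by
    intro ε hε
    set Kr : ℝ := (K : ℝ) with hKr
    have hKr0 : 0 ≤ Kr := K.coe_nonneg
    set C : ℝ := Kr * ‖v‖ + ‖v‖ + ε / 4 with hC
    have hC0 : 0 ≤ C := by positivity
    set ε2 : ℝ := ε / (4 * (C + 1)) with hε2
    have hε2pos : 0 < ε2 := by positivity
    set δ : ℝ := min (r / 2) (ε / (4 * (Kr + 1))) with hδ
    have hδpos : 0 < δ := lt_min (by linarith) (by positivity)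
    have hδr : δ ≤ r / 2 := min_le_left _ _
    -- pick a good z close to x
    have hzex : ∃ z : EuclideanSpace ℝ (Fin n), dist z x < δ ∧ volume {t : ℝ | t ∈ Ioc (0:ℝ) 1 ∧ z + t • v ∈ N'} = 0 := by
      by_contra hcon
      push_neg at hcon
      rw [ae_iff] at hgood
      have hsub : ball x δ ⊆ {z : EuclideanSpace ℝ (Fin n) | ¬ volume {t : ℝ | t ∈ Ioc (0:ℝ) 1 ∧ z + t • v ∈ N'} = 0} := by
        intro z hz
        exact hcon z (mem_ball.mp hz)
      have h1 : volume (ball x δ) = 0 :=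
        le_antisymm ((measure_mono hsub).trans hgood.le) zero_le
      exact absurd h1 (measure_ball_pos volume x hδpos).ne'
    obtain ⟨z, hzx, hz0⟩ := hzex
    -- points on the translated segment are covered
    have hzS : ∀ b ∈ Icc (0:ℝ) 1, ∃ p ∈ S, dist (z + b • v) p < r := by
      intro b hb
      refine ⟨x + b • v, ?_, ?_⟩
      · rw [hS, segment_eq_image']
        exact ⟨b, hb, rfl⟩
      · rw [dist_add_right]
        calc dist z x < δ := hzx
          _ ≤ r / 2 := hδr
          _ < r := by linarith
    set g : ℝ → EuclideanSpace ℝ (Fin m) := fun t => f (z + t • v) with hg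
    have hdistline : ∀ t b : ℝ, dist (z + t • v) (z + b • v) = |t - b| * ‖v‖ := by
      intro t b
      rw [dist_eq_norm]
      have : z + t • v - (z + b • v) = (t - b) • v := by
        rw [sub_smul]; abel
      rw [this, norm_smul, Real.norm_eq_abs]
    have hloc : ∀ b ∈ Icc (0:ℝ) 1, ∀ᶠ t in nhds b, ‖g t - g b‖ ≤ (Kr * ‖v‖) * |t - b| := by
      intro b hb
      obtain ⟨hbU, hblip⟩ := hcov (z + b • v) (hzS b hb)
      rw [Metric.eventually_nhds_iff]
      refine ⟨r / (‖v‖ + 1), by positivity, fun t ht => ?_⟩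
      rw [Real.dist_eq] at ht
      have htmem : z + t • v ∈ ball (z + b • v) r := by
        rw [mem_ball, hdistline]
        calc |t - b| * ‖v‖ ≤ |t - b| * (‖v‖ + 1) := by
              apply mul_le_mul_of_nonneg_left (by linarith) (abs_nonneg _)
          _ < (r / (‖v‖ + 1)) * (‖v‖ + 1) := by
              apply mul_lt_mul_of_pos_right ht (by positivity)
          _ = r := by field_simp
      have := hblip.dist_le_mul _ htmem _ (mem_ball_self hr)
      rw [hdistline] at this
      calc ‖g t - g b‖ = dist (g t) (g b) := (dist_eq_norm _ _).symm
        _ ≤ Kr * (|t - b| * ‖v‖) := this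
        _ = (Kr * ‖v‖) * |t - b| := by ring
    have hgcont : ContinuousOn g (Icc 0 1) := by
      intro b hb
      obtain ⟨hbU, hblip⟩ := hcov (z + b • v) (hzS b hb)
      have hfc : ContinuousAt f (z + b • v) :=
        hblip.continuousOn.continuousAt (ball_mem_nhds _ hr)
      have hline : ContinuousAt (fun t : ℝ => z + t • v) b := by fun_prop
      exact (ContinuousAt.comp (f := fun t : ℝ => z + t • v) (x := b) hfc hline).continuousWithinAt
    -- bad set on the line and open superset
    set Bad : Set ℝ := {t | t ∈ Icc (0:ℝ) 1 ∧ z + t • v ∈ N'} with hBad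
    have hBad0 : volume Bad = 0 := by
      have hsub : Bad ⊆ {t : ℝ | t ∈ Ioc (0:ℝ) 1 ∧ z + t • v ∈ N'} ∪ {(0:ℝ)} := by
        rintro t ⟨⟨ht0, ht1⟩, htN⟩
        rcases eq_or_lt_of_le ht0 with h | h
        · exact Or.inr (by simp [← h])
        · exact Or.inl ⟨⟨h, ht1⟩, htN⟩
      refine le_antisymm ?_ zero_le
      calc volume Bad ≤ volume ({t : ℝ | t ∈ Ioc (0:ℝ) 1 ∧ z + t • v ∈ N'} ∪ {(0:ℝ)}) :=
            measure_mono hsub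
        _ ≤ volume {t : ℝ | t ∈ Ioc (0:ℝ) 1 ∧ z + t • v ∈ N'} + volume ({(0:ℝ)} : Set ℝ) :=
            measure_union_le _ _
        _ = 0 := by rw [hz0, Real.volume_singleton, add_zero]
    obtain ⟨O, hBadO, hOopen, hOlt⟩ := Set.exists_isOpen_lt_of_lt Bad (ENNReal.ofReal ε2)
      (by rw [hBad0]; exact ENNReal.ofReal_pos.mpr hε2pos)
    -- the derivative bound off O
    have hd : ∀ t ∈ Icc (0:ℝ) 1, t ∉ O → ∃ d, HasDerivAt g d t ∧ ‖d‖ ≤ ‖v‖ := by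
      intro t ht htO
      have hpN' : z + t • v ∉ N' := fun h => htO (hBadO ⟨ht, h⟩)
      obtain ⟨hbU, _⟩ := hcov (z + t • v) (hzS t ht)
      have hpU : z + t • v ∈ U := hbU (mem_ball_self hr)
      have hp : DifferentiableAt ℝ f (z + t • v) ∧ ‖fderiv ℝ f (z + t • v)‖ ≤ 1 := by
        by_contra h
        exact hpN' (hNN' ⟨h, hpU⟩)
      have hline : HasDerivAt (fun s : ℝ => z + s • v) v t := by
        simpa using ((hasDerivAt_id t).smul_const v).const_add z
      refine ⟨fderiv ℝ f (z + t • v) v, hp.1.hasFDerivAt.comp_hasDerivAt t hline, ?_⟩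
      calc ‖fderiv ℝ f (z + t • v) v‖ ≤ ‖fderiv ℝ f (z + t • v)‖ * ‖v‖ :=
            (fderiv ℝ f (z + t • v)).le_opNorm v
        _ ≤ 1 * ‖v‖ := mul_le_mul_of_nonneg_right hp.2 (norm_nonneg v)
        _ = ‖v‖ := one_mul _
    -- apply the 1-D lemma
    have h1d := oneD g (Kr * ‖v‖) ‖v‖ (ε / 4) (by positivity) (norm_nonneg v) (by positivity)
      hgcont hloc O hOopen hd
    have hOsmall : (volume (O ∩ Ioc 0 1)).toReal ≤ ε2 :=
      ENNReal.toReal_le_of_le_ofReal hε2pos.le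
        ((measure_mono inter_subset_left).trans hOlt.le)
    have hmid : ‖g 1 - g 0‖ ≤ ‖v‖ + ε / 4 + ε / 4 := by
      have hCmul : C * ε2 ≤ ε / 4 := by
        rw [hε2, mul_div_assoc']
        rw [div_le_div_iff₀ (by positivity) (by norm_num)]
        nlinarith
      have h2 : (Kr * ‖v‖ + ‖v‖ + ε / 4) * (volume (O ∩ Ioc 0 1)).toReal ≤ C * ε2 := by
        rw [hC]
        apply mul_le_mul_of_nonneg_left hOsmall (by positivity)
      calc ‖g 1 - g 0‖ ≤ (‖v‖ + ε / 4) + (Kr * ‖v‖ + ‖v‖ + ε / 4) * (volume (O ∩ Ioc 0 1)).toReal := h1d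
        _ ≤ (‖v‖ + ε / 4) + ε / 4 := by linarith [h2.trans hCmul]
        _ = ‖v‖ + ε / 4 + ε / 4 := by ring
    -- endpoints
    have hxz : ‖f x - f z‖ ≤ ε / 4 := by
      obtain ⟨_, hxlip⟩ := hcov x ⟨x, left_mem_segment ℝ x y, by simp [hr]⟩
      have hxmem : x ∈ ball x r := mem_ball_self hr
      have hzmem : z ∈ ball x r := by
        rw [mem_ball]
        calc dist z x < δ := hzx
          _ ≤ r / 2 := hδr
          _ < r := by linarith
      have := hxlip.dist_le_mul _ hxmem _ hzmem
      have hδε : δ ≤ ε / (4 * (Kr + 1)) := min_le_right _ _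
      calc ‖f x - f z‖ = dist (f x) (f z) := (dist_eq_norm _ _).symm
        _ ≤ Kr * dist x z := this
        _ ≤ Kr * δ := by
            apply mul_le_mul_of_nonneg_left _ hKr0
            rw [dist_comm]; exact hzx.le
        _ ≤ Kr * (ε / (4 * (Kr + 1))) := mul_le_mul_of_nonneg_left hδε hKr0
        _ ≤ ε / 4 := by
            rw [mul_div_assoc', div_le_div_iff₀ (by positivity) (by norm_num)]
            nlinarith
    have hvy : ‖f (z + v) - f y‖ ≤ ε / 4 := by
      obtain ⟨_, hylip⟩ := hcov y ⟨y, right_mem_segment ℝ x y, by simp [hr]⟩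
      have hymem : y ∈ ball y r := mem_ball_self hr
      have hzvy : dist (z + v) y = dist z x := by
        rw [dist_eq_norm, dist_eq_norm]
        congr 1
        rw [hv]; abel
      have hzvmem : z + v ∈ ball y r := by
        rw [mem_ball, hzvy]
        calc dist z x < δ := hzx
          _ ≤ r / 2 := hδr
          _ < r := by linarith
      have := hylip.dist_le_mul _ hzvmem _ hymem
      have hδε : δ ≤ ε / (4 * (Kr + 1)) := min_le_right _ _
      calc ‖f (z + v) - f y‖ = dist (f (z + v)) (f y) := (dist_eq_norm _ _).symm
        _ ≤ Kr * dist (z + v) y := this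
        _ ≤ Kr * δ := by
            rw [hzvy]
            exact mul_le_mul_of_nonneg_left hzx.le hKr0
        _ ≤ Kr * (ε / (4 * (Kr + 1))) := mul_le_mul_of_nonneg_left hδε hKr0
        _ ≤ ε / 4 := by
            rw [mul_div_assoc', div_le_div_iff₀ (by positivity) (by norm_num)]
            nlinarith
    have hg1 : g 1 = f (z + v) := by rw [hg]; simp
    have hg0 : g 0 = f z := by rw [hg]; simp
    have hnormv : ‖x - y‖ = ‖v‖ := by rw [hv, norm_sub_rev]
    calc ‖f x - f y‖ ≤ ‖f x - f z‖ + ‖f z - f y‖ := norm_sub_le_norm_sub_add_norm_sub _ _ _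
      _ ≤ ‖f x - f z‖ + (‖f z - f (z + v)‖ + ‖f (z + v) - f y‖) := by
          linarith [norm_sub_le_norm_sub_add_norm_sub (f z) (f (z + v)) (f y)]
      _ = ‖f x - f z‖ + (‖g 1 - g 0‖ + ‖f (z + v) - f y‖) := by
          rw [hg1, hg0, norm_sub_rev (f z)]
      _ ≤ ε / 4 + ((‖v‖ + ε / 4 + ε / 4) + ε / 4) := by
          gcongr
      _ ≤ ‖x - y‖ + ε := by rw [hnormv]; linarith
  exact le_of_forall_pos_le_add main
end

section
/- Let X be a compact metric space, Y a metric space, d ≥ 0, and let f : X → Y be a surjective 1-Lipschitz map. Suppose the d-dimensional Hausdorff measures satisfy μH^d(X) = μH^d(Y) < ∞. Then for every closed set A ⊆ X with μH^d(A) = 0, the saturated set f⁻¹(f(A)) also satisfies μH^d(f⁻¹(f(A))) = 0. -/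
open MeasureTheory
open scoped NNReal

/-- A `1`-Lipschitz surjection between a compact metric space and a metric space of equal
finite `d`-dimensional Hausdorff measure carries saturations of closed null sets to null sets:
if `A` is closed with `μH^d(A) = 0`, then `μH^d(f⁻¹(f(A))) = 0`. -/
theorem saturation_of_null_set_is_null
    {X Y : Type*} [MetricSpace X] [CompactSpace X] [MetricSpace Y]
    [MeasurableSpace X] [BorelSpace X] [MeasurableSpace Y] [BorelSpace Y]
    (d : ℝ) (hd : 0 ≤ d)
    (f : X → Y) (hsurj : Function.Surjective f) (hlip : LipschitzWith 1 f)
    (hvol : μH[d] (Set.univ : Set X) = μH[d] (Set.univ : Set Y))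
    (hfin : μH[d] (Set.univ : Set X) < ⊤) :
    ∀ A : Set X, IsClosed A → μH[d] A = 0 → μH[d] (f ⁻¹' (f '' A)) = 0 := by
  intro A hA hA0
  set B := f '' A with hB
  have hBcl : IsClosed B := (hA.isCompact.image hlip.continuous).isClosed
  have hSmeas : MeasurableSet (f ⁻¹' B) := (hBcl.preimage hlip.continuous).measurableSet
  -- B is null
  have hB0 : μH[d] B = 0 := by
    have := hlip.hausdorffMeasure_image_le hd A
    simpa [hA0] using this
  -- complement of saturation maps onto Bᶜ
  have himg : Bᶜ ⊆ f '' (f ⁻¹' B)ᶜ := by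
    intro y hy
    obtain ⟨x, rfl⟩ := hsurj y
    exact ⟨x, hy, rfl⟩
  have h1 : μH[d] (Set.univ : Set Y) ≤ μH[d] ((f ⁻¹' B)ᶜ) := by
    have hY : μH[d] (Set.univ : Set Y) ≤ μH[d] (Bᶜ) := by
      have : (Set.univ : Set Y) ⊆ Bᶜ ∪ B := by
        intro y _; by_cases h : y ∈ B
        · exact Or.inr h
        · exact Or.inl h
      calc μH[d] (Set.univ : Set Y) ≤ μH[d] (Bᶜ ∪ B) := measure_mono this
        _ ≤ μH[d] (Bᶜ) + μH[d] B := measure_union_le _ _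
        _ = μH[d] (Bᶜ) := by simp [hB0]
    calc μH[d] (Set.univ : Set Y) ≤ μH[d] (Bᶜ) := hY
      _ ≤ μH[d] (f '' (f ⁻¹' B)ᶜ) := measure_mono himg
      _ ≤ (1 : ℝ≥0) ^ d * μH[d] ((f ⁻¹' B)ᶜ) := hlip.hausdorffMeasure_image_le hd _
      _ = μH[d] ((f ⁻¹' B)ᶜ) := by simp
  have hsum : μH[d] (f ⁻¹' B) + μH[d] ((f ⁻¹' B)ᶜ) = μH[d] (Set.univ : Set X) :=
    measure_add_measure_compl hSmeas
  have hcfin : μH[d] ((f ⁻¹' B)ᶜ) ≠ ⊤ :=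
    ((measure_mono (Set.subset_univ _)).trans_lt hfin).ne
  have hle : μH[d] (f ⁻¹' B) + μH[d] ((f ⁻¹' B)ᶜ) ≤ 0 + μH[d] ((f ⁻¹' B)ᶜ) := by
    rw [hsum, hvol, zero_add]; exact h1
  have := (ENNReal.add_le_add_iff_right hcfin).mp hle
  exact le_antisymm this zero_le
end

section
/- Let n ≥ 1, let U ⊆ ℝⁿ be an open set with finite volume, and let f : U → ℝⁿ be a 1-Lipschitz map such that vol(f(U)) = vol(U). Then: (1) for almost every x ∈ U, f is differentiable at x and |det Df(x)| = 1; and (2) for almost every y ∈ f(U), the fiber U ∩ f⁻¹({y}) consists of exactly one point. -/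
open MeasureTheory Module Set ENNReal

section aux
variable (n : ℕ)

theorem lip_image_null (f : EuclideanSpace ℝ (Fin n) → EuclideanSpace ℝ (Fin n))
    (s : Set (EuclideanSpace ℝ (Fin n))) (K : NNReal)
    (h : LipschitzOnWith K f s) (hs : volume s = 0) : volume (f '' s) = 0 := by
  have h1 := Measure.isAddLeftInvariant_eq_smul
    (μH[finrank ℝ (EuclideanSpace ℝ (Fin n))] : Measure (EuclideanSpace ℝ (Fin n))) volume
  have h2 := Measure.isAddLeftInvariant_eq_smul
    (volume : Measure (EuclideanSpace ℝ (Fin n))) μH[finrank ℝ (EuclideanSpace ℝ (Fin n))]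
  have hνs : μH[finrank ℝ (EuclideanSpace ℝ (Fin n))] s = 0 := by
    rw [h1]; rw [Measure.smul_apply, hs, smul_zero]
  have himg : μH[finrank ℝ (EuclideanSpace ℝ (Fin n))] (f '' s) = 0 := by
    have := h.hausdorffMeasure_image_le
      (d := ((finrank ℝ (EuclideanSpace ℝ (Fin n)) : ℕ) : ℝ)) (by positivity)
    refine le_antisymm (this.trans ?_) zero_le
    rw [hνs, mul_zero]
  rw [h2]; rw [Measure.smul_apply, himg, smul_zero]

theorem det_le_one (A : EuclideanSpace ℝ (Fin n) →L[ℝ] EuclideanSpace ℝ (Fin n))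
    (hA : ‖A‖ ≤ 1) : |A.det| ≤ 1 := by
  have himg : A '' Metric.closedBall 0 1 ⊆ Metric.closedBall 0 1 := by
    rintro - ⟨x, hx, rfl⟩
    simp only [Metric.mem_closedBall, dist_zero_right] at hx ⊢
    calc ‖A x‖ ≤ ‖A‖ * ‖x‖ := A.le_opNorm x
    _ ≤ 1 * 1 := by apply mul_le_mul hA hx (norm_nonneg _) zero_le_one
    _ = 1 := one_mul 1
  have h1 := (volume : Measure (EuclideanSpace ℝ (Fin n))).addHaar_image_continuousLinearMap A
    (Metric.closedBall 0 1)
  have h2 : volume (A '' Metric.closedBall (0 : EuclideanSpace ℝ (Fin n)) 1)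
      ≤ volume (Metric.closedBall (0 : EuclideanSpace ℝ (Fin n)) 1) := measure_mono himg
  rw [h1] at h2
  have hpos : volume (Metric.closedBall (0 : EuclideanSpace ℝ (Fin n)) 1) ≠ 0 :=
    (Metric.measure_closedBall_pos volume 0 one_pos).ne'
  have hfin : volume (Metric.closedBall (0 : EuclideanSpace ℝ (Fin n)) 1) ≠ ⊤ :=
    measure_closedBall_lt_top.ne
  have h3 : ENNReal.ofReal |A.det| ≤ 1 :=
    (ENNReal.mul_le_mul_iff_left hpos hfin).mp (by rw [one_mul]; exact h2)
  exact (ENNReal.ofReal_le_one).mp h3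

theorem open_sigma_compact (U : Set (EuclideanSpace ℝ (Fin n))) (hU : IsOpen U) :
    IsSigmaCompact U := by
  have hcover : U = ⋃ m : ℕ, ({x : EuclideanSpace ℝ (Fin n) |
      ((m : ℝ≥0∞) + 1)⁻¹ ≤ EMetric.infEdist x Uᶜ} ∩ Metric.closedBall 0 m) := by
    ext x
    simp only [mem_iUnion, mem_inter_iff, mem_setOf_eq]
    constructor
    · intro hx
      have hpos : 0 < EMetric.infEdist x Uᶜ := by
        rw [EMetric.infEdist, EMetric.infEdist_pos_iff_notMem_closure, hU.isClosed_compl.closure_eq]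
        simpa using hx
      obtain ⟨m, hm⟩ := ENNReal.exists_inv_nat_lt hpos.ne'
      obtain ⟨k, hk⟩ := exists_nat_ge ‖x‖
      refine ⟨max m k, ⟨?_, ?_⟩⟩
      · refine le_trans ?_ hm.le
        apply ENNReal.inv_le_inv.mpr
        have h1 : (m : ℝ≥0∞) ≤ (max m k : ℕ) := by exact_mod_cast le_max_left m k
        exact h1.trans le_self_add
      · simp only [Metric.mem_closedBall, dist_zero_right]
        exact hk.trans (by exact_mod_cast le_max_right m k)
    · rintro ⟨m, hm, -⟩
      by_contra hx
      have h0 : EMetric.infEdist x Uᶜ = 0 := EMetric.infEdist_zero_of_mem hx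
      rw [h0, le_zero_iff] at hm
      exact (ENNReal.inv_ne_zero.mpr (by simp)) hm
  rw [hcover]
  apply isSigmaCompact_iUnion_of_isCompact
  intro m
  apply IsCompact.of_isClosed_subset (isCompact_closedBall 0 m)
  · exact (isClosed_le continuous_const EMetric.continuous_infEdist).inter Metric.isClosed_closedBall
  · exact inter_subset_right

end aux

/-- A volume-preserving `1`-Lipschitz map on an open set `U ⊆ ℝⁿ` of finite volume has
Jacobian of absolute value `1` almost everywhere, and almost every fiber over its image
is a single point. -/
theorem volume_preserving_one_lipschitz_jacobian_and_fibers
    (n : ℕ) (hn : 1 ≤ n)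
    (U : Set (EuclideanSpace ℝ (Fin n))) (hU : IsOpen U) (hUfin : volume U < ⊤)
    (f : EuclideanSpace ℝ (Fin n) → EuclideanSpace ℝ (Fin n))
    (hlip : LipschitzOnWith 1 f U)
    (hvol : volume (f '' U) = volume U) :
    (∀ᵐ x ∂(volume.restrict U),
        DifferentiableAt ℝ f x ∧ |(fderiv ℝ f x).det| = 1) ∧
      (∀ᵐ y ∂(volume.restrict (f '' U)), ∃ x, U ∩ f ⁻¹' {y} = {x}) := by
  set μ : Measure (EuclideanSpace ℝ (Fin n)) := volume with hμ
  set D : Set (EuclideanSpace ℝ (Fin n)) := U ∩ {x | DifferentiableAt ℝ f x} with hD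
  have hDmeas : MeasurableSet D :=
    hU.measurableSet.inter (measurableSet_of_differentiableAt ℝ f)
  have hDU : D ⊆ U := inter_subset_left
  -- Rademacher
  have hae_diff : ∀ᵐ x ∂μ, x ∈ U → DifferentiableAt ℝ f x := by
    filter_upwards [hlip.ae_differentiableWithinAt_of_mem (μ := μ)] with x hx hxU
    exact (hx hxU).differentiableAt (hU.mem_nhds hxU)
  have hUD_null : μ (U \ D) = 0 := by
    apply measure_eq_zero_iff_ae_notMem.mpr
    filter_upwards [hae_diff] with x hx
    rintro ⟨hxU, hxD⟩
    exact hxD ⟨hxU, hx hxU⟩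
  -- derivative norm bound and determinant bound on D
  have hdet_le : ∀ x ∈ D, |(fderiv ℝ f x).det| ≤ 1 := by
    rintro x ⟨hxU, hxd⟩
    apply det_le_one
    have h1 := (hxd.hasFDerivAt).le_of_lipschitzOn (hU.mem_nhds hxU) hlip
    exact_mod_cast h1
  -- measurability of the integrand
  have hmeas_g : Measurable fun x => ENNReal.ofReal |(fderiv ℝ f x).det| := by
    apply ENNReal.measurable_ofReal.comp
    exact (continuous_abs.comp ContinuousLinearMap.continuous_det).measurable.comp
      (measurable_fderiv ℝ f)
  -- image of measurable subsets: upper bound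
  have key_le : ∀ V : Set (EuclideanSpace ℝ (Fin n)), MeasurableSet V → V ⊆ U →
      μ (f '' V) ≤ μ V := by
    intro V hVmeas hVU
    have hsplit : f '' V ⊆ f '' (V ∩ D) ∪ f '' (V \ D) := by
      rw [← image_union]
      apply image_mono
      intro x hx
      by_cases h : x ∈ D
      · exact Or.inl ⟨hx, h⟩
      · exact Or.inr ⟨hx, h⟩
    have hnull : μ (f '' (V \ D)) = 0 := by
      apply lip_image_null n f _ 1 (hlip.mono (diff_subset.trans hVU))
      exact measure_mono_null (diff_subset_diff_left hVU) hUD_null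
    calc μ (f '' V) ≤ μ (f '' (V ∩ D)) + μ (f '' (V \ D)) :=
          (measure_mono hsplit).trans (measure_union_le _ _)
    _ = μ (f '' (V ∩ D)) := by rw [hnull, add_zero]
    _ ≤ ∫⁻ x in V ∩ D, ENNReal.ofReal |(fderiv ℝ f x).det| ∂μ := by
        apply addHaar_image_le_lintegral_abs_det_fderiv μ (hVmeas.inter hDmeas)
        intro x hx
        exact (hx.2.2.hasFDerivAt).hasFDerivWithinAt
    _ ≤ ∫⁻ _x in V ∩ D, 1 ∂μ := by
        apply setLIntegral_mono measurable_one
        intro x hx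
        exact ENNReal.ofReal_le_one.mpr (hdet_le x hx.2)
    _ = μ (V ∩ D) := setLIntegral_one _
    _ ≤ μ V := measure_mono inter_subset_left
  -- lower bound
  have key_ge : ∀ V : Set (EuclideanSpace ℝ (Fin n)), MeasurableSet V → V ⊆ U →
      μ V ≤ μ (f '' V) := by
    intro V hVmeas hVU
    have hsplit : f '' U ⊆ f '' V ∪ f '' (U \ V) := by
      rw [← image_union]
      apply image_mono
      intro x hx
      by_cases h : x ∈ V
      · exact Or.inl h
      · exact Or.inr ⟨hx, h⟩
    have h1 : μ U ≤ μ (f '' V) + μ (U \ V) := by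
      calc μ U = μ (f '' U) := hvol.symm
      _ ≤ μ (f '' V) + μ (f '' (U \ V)) := (measure_mono hsplit).trans (measure_union_le _ _)
      _ ≤ μ (f '' V) + μ (U \ V) :=
          add_le_add_right (key_le _ (hU.measurableSet.diff hVmeas) diff_subset) _
    have h2 : μ V + μ (U \ V) = μ U := by
      have := measure_inter_add_diff (μ := μ) U hVmeas
      rwa [inter_eq_self_of_subset_right hVU] at this
    rw [← h2] at h1
    exact (ENNReal.add_le_add_iff_right ((measure_mono diff_subset).trans_lt hUfin).ne).mp h1
  -- equality of integral over D
  have hDU_eq : μ D = μ U := by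
    apply le_antisymm (measure_mono hDU)
    have h := measure_inter_add_diff (μ := μ) U hDmeas
    rw [inter_eq_self_of_subset_right hDU] at h
    rw [← h, hUD_null, add_zero]
  have h_int_le : ∫⁻ x in D, ENNReal.ofReal |(fderiv ℝ f x).det| ∂μ ≤ μ D := by
    calc ∫⁻ x in D, ENNReal.ofReal |(fderiv ℝ f x).det| ∂μ ≤ ∫⁻ _x in D, 1 ∂μ := by
          apply setLIntegral_mono measurable_one
          intro x hx
          exact ENNReal.ofReal_le_one.mpr (hdet_le x hx)
    _ = μ D := setLIntegral_one _
  have h_int_ge : μ D ≤ ∫⁻ x in D, ENNReal.ofReal |(fderiv ℝ f x).det| ∂μ := by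
    have hnull : μ (f '' (U \ D)) = 0 := by
      apply lip_image_null n f _ 1 (hlip.mono diff_subset)
      exact hUD_null
    have hsplit : f '' U ⊆ f '' D ∪ f '' (U \ D) := by
      rw [← image_union]
      apply image_mono
      intro x hx
      by_cases h : x ∈ D
      · exact Or.inl h
      · exact Or.inr ⟨hx, h⟩
    calc μ D = μ (f '' U) := by rw [hvol, hDU_eq]
    _ ≤ μ (f '' D) + μ (f '' (U \ D)) := (measure_mono hsplit).trans (measure_union_le _ _)
    _ = μ (f '' D) := by rw [hnull, add_zero]
    _ ≤ ∫⁻ x in D, ENNReal.ofReal |(fderiv ℝ f x).det| ∂μ := by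
        apply addHaar_image_le_lintegral_abs_det_fderiv μ hDmeas
        intro x hx
        exact (hx.2.hasFDerivAt).hasFDerivWithinAt
  have h_int_eq : ∫⁻ x in D, ENNReal.ofReal |(fderiv ℝ f x).det| ∂μ = μ D :=
    le_antisymm h_int_le h_int_ge
  have hDfin : μ D ≠ ⊤ := ((measure_mono hDU).trans_lt hUfin).ne
  have hone : ∀ᵐ x ∂(μ.restrict D), (1 : ℝ≥0∞) - ENNReal.ofReal |(fderiv ℝ f x).det| = 0 := by
    have hsub : ∫⁻ x in D, ((1 : ℝ≥0∞) - ENNReal.ofReal |(fderiv ℝ f x).det|) ∂μ = 0 := by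
      rw [lintegral_sub hmeas_g (by rw [h_int_eq]; exact hDfin) ?hle]
      · rw [h_int_eq, setLIntegral_one, tsub_self]
      case hle =>
        rw [Filter.EventuallyLE, ae_restrict_iff' hDmeas]
        filter_upwards with x hx
        exact ENNReal.ofReal_le_one.mpr (hdet_le x hx)
    have := (lintegral_eq_zero_iff (measurable_const.sub hmeas_g)).mp hsub
    filter_upwards [this] with x hx
    exact hx
  have part1 : ∀ᵐ x ∂(μ.restrict U),
      DifferentiableAt ℝ f x ∧ |(fderiv ℝ f x).det| = 1 := by
    rw [ae_restrict_iff' hU.measurableSet]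
    filter_upwards [hae_diff, (ae_restrict_iff' hDmeas).mp hone] with x hx1 hx2 hxU
    have hxD : x ∈ D := ⟨hxU, hx1 hxU⟩
    refine ⟨hx1 hxU, le_antisymm (hdet_le x hxD) ?_⟩
    have h1le : (1 : ℝ≥0∞) ≤ ENNReal.ofReal |(fderiv ℝ f x).det| :=
      tsub_eq_zero_iff_le.mp (hx2 hxD)
    exact ENNReal.one_le_ofReal.mp h1le
  refine ⟨part1, ?_⟩
  -- the image is measurable (it is sigma-compact)
  have himg_meas : MeasurableSet (f '' U) := by
    obtain ⟨K, hK, hKeq⟩ := (open_sigma_compact n U hU).image_of_continuousOn hlip.continuousOn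
    rw [← hKeq]
    exact MeasurableSet.iUnion fun m => (hK m).measurableSet
  -- the set of points with at least two preimages
  set B : Set (EuclideanSpace ℝ (Fin n)) :=
    {y | ∃ x₁, x₁ ∈ U ∧ ∃ x₂, x₂ ∈ U ∧ x₁ ≠ x₂ ∧ f x₁ = y ∧ f x₂ = y} with hB
  have hpair : ∀ c₁ c₂ : EuclideanSpace ℝ (Fin n), ∀ r : ℝ,
      Disjoint (Metric.ball c₁ r) (Metric.ball c₂ r) →
      μ (f '' (U ∩ Metric.ball c₁ r) ∩ f '' (U ∩ Metric.ball c₂ r)) = 0 := by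
    intro c₁ c₂ r hdisj
    set V₁ := U ∩ Metric.ball c₁ r with hV₁def
    set V₂ := U ∩ Metric.ball c₂ r with hV₂def
    have hV₁ : MeasurableSet V₁ := hU.measurableSet.inter Metric.isOpen_ball.measurableSet
    have hV₂ : MeasurableSet V₂ := hU.measurableSet.inter Metric.isOpen_ball.measurableSet
    have hV₁U : V₁ ⊆ U := inter_subset_left
    have hV₂U : V₂ ⊆ U := inter_subset_left
    have hdisjV : Disjoint V₁ V₂ := hdisj.mono inter_subset_right inter_subset_right
    have e₁ : μ (f '' V₁) = μ V₁ := le_antisymm (key_le _ hV₁ hV₁U) (key_ge _ hV₁ hV₁U)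
    have e₂ : μ (f '' V₂) = μ V₂ := le_antisymm (key_le _ hV₂ hV₂U) (key_ge _ hV₂ hV₂U)
    have e₁₂ : μ (f '' V₁ ∪ f '' V₂) = μ V₁ + μ V₂ := by
      rw [← image_union]
      have hu : MeasurableSet (V₁ ∪ V₂) := hV₁.union hV₂
      have heq := le_antisymm (key_le _ hu (union_subset hV₁U hV₂U))
        (key_ge _ hu (union_subset hV₁U hV₂U))
      rw [heq, measure_union hdisjV hV₂]
    set T₁ := toMeasurable μ (f '' V₁) with hT₁def
    set T₂ := toMeasurable μ (f '' V₂) with hT₂def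
    have hT₂ : MeasurableSet T₂ := measurableSet_toMeasurable μ _
    have key : μ (T₁ ∪ T₂) + μ (T₁ ∩ T₂) = μ V₁ + μ V₂ := by
      rw [measure_union_add_inter T₁ hT₂, measure_toMeasurable, measure_toMeasurable, e₁, e₂]
    have hlb : μ V₁ + μ V₂ ≤ μ (T₁ ∪ T₂) := by
      rw [← e₁₂]
      exact measure_mono (union_subset_union (subset_toMeasurable μ _) (subset_toMeasurable μ _))
    have hfin' : μ (T₁ ∪ T₂) ≠ ⊤ := by
      refine ((measure_union_le _ _).trans_lt ?_).ne
      rw [measure_toMeasurable, measure_toMeasurable, e₁, e₂]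
      exact ENNReal.add_lt_top.mpr
        ⟨(measure_mono hV₁U).trans_lt hUfin, (measure_mono hV₂U).trans_lt hUfin⟩
    have hc : μ (T₁ ∪ T₂) + μ (T₁ ∩ T₂) ≤ μ (T₁ ∪ T₂) + 0 := by
      rw [add_zero, key]
      exact hlb
    have hz : μ (T₁ ∩ T₂) = 0 :=
      le_antisymm ((ENNReal.add_le_add_iff_left hfin').mp hc) zero_le
    exact measure_mono_null
      (inter_subset_inter (subset_toMeasurable μ _) (subset_toMeasurable μ _)) hz
  obtain ⟨S, hScount, hSdense⟩ :=
    TopologicalSpace.exists_countable_dense (EuclideanSpace ℝ (Fin n))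
  have hBnull : μ B = 0 := by
    set T : Set (EuclideanSpace ℝ (Fin n) × EuclideanSpace ℝ (Fin n) × ℝ) :=
      {p | p.1 ∈ S ∧ p.2.1 ∈ S ∧ (∃ q : ℚ, (q : ℝ) = p.2.2) ∧
        Disjoint (Metric.ball p.1 p.2.2) (Metric.ball p.2.1 p.2.2)} with hT
    have hTcount : T.Countable := by
      have hsub : T ⊆ S ×ˢ (S ×ˢ (range ((↑) : ℚ → ℝ))) := by
        rintro ⟨c₁, c₂, r⟩ ⟨h1, h2, ⟨q, hq⟩, -⟩
        exact ⟨h1, h2, ⟨q, hq⟩⟩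
      exact ((hScount.prod (hScount.prod (countable_range _)))).mono hsub
    have hsubB : B ⊆ ⋃ p ∈ T,
        (f '' (U ∩ Metric.ball p.1 p.2.2) ∩ f '' (U ∩ Metric.ball p.2.1 p.2.2)) := by
      rintro y ⟨x₁, hx₁U, x₂, hx₂U, hne, hfx₁, hfx₂⟩
      have hd : 0 < dist x₁ x₂ := dist_pos.mpr hne
      obtain ⟨q, hq0, hq4⟩ := exists_rat_btwn (by positivity : (0 : ℝ) < dist x₁ x₂ / 4)
      have hq0' : (0 : ℝ) < q := by exact_mod_cast hq0
      obtain ⟨c₁, hc₁S, hc₁⟩ := hSdense.exists_dist_lt x₁ hq0'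
      obtain ⟨c₂, hc₂S, hc₂⟩ := hSdense.exists_dist_lt x₂ hq0'
      have htri := dist_triangle4 x₁ c₁ c₂ x₂
      have hdisj : Disjoint (Metric.ball c₁ (q : ℝ)) (Metric.ball c₂ (q : ℝ)) := by
        apply Metric.ball_disjoint_ball
        have h1 : dist x₁ c₁ < q := hc₁
        have h2 : dist c₂ x₂ < q := by rw [dist_comm]; exact hc₂
        linarith
      refine mem_biUnion (show (c₁, c₂, (q : ℝ)) ∈ T from ⟨hc₁S, hc₂S, ⟨q, rfl⟩, hdisj⟩) ?_
      constructor
      · exact ⟨x₁, ⟨hx₁U, by simpa [Metric.mem_ball, dist_comm] using hc₁⟩, hfx₁⟩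
      · exact ⟨x₂, ⟨hx₂U, by simpa [Metric.mem_ball, dist_comm] using hc₂⟩, hfx₂⟩
    refine measure_mono_null hsubB ?_
    rw [measure_biUnion_null_iff hTcount]
    rintro ⟨c₁, c₂, r⟩ hp
    exact hpair c₁ c₂ r hp.2.2.2
  rw [ae_restrict_iff' himg_meas]
  have hBae : ∀ᵐ y ∂μ, y ∉ B := measure_eq_zero_iff_ae_notMem.mp hBnull
  filter_upwards [hBae] with y hyB hyS
  obtain ⟨x, hxU, hfx⟩ := hyS
  refine ⟨x, ?_⟩
  ext z
  simp only [mem_inter_iff, mem_preimage, mem_singleton_iff]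
  constructor
  · rintro ⟨hzU, hzf⟩
    by_contra hzx
    exact hyB ⟨z, hzU, x, hxU, hzx, hzf, hfx⟩
  · rintro rfl
    exact ⟨hxU, hfx⟩
end

section
/- Let n ≥ 1, let U ⊆ ℝⁿ be an open set, and let f : U → ℝⁿ be an injective 1-Lipschitz map such that for almost every x ∈ U, f is differentiable at x with det Df(x) = 1. Then f is a local isometry: for every x ∈ U there exists ε > 0 with the open ball B(x, ε) contained in U such that ‖f(y) − f(z)‖ = ‖y − z‖ for all y, z ∈ B(x, ε). -/
open MeasureTheory

/-- An injective `1`-Lipschitz map on an open set `U ⊆ ℝⁿ` whose Jacobian determinant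
equals `1` almost everywhere is a local isometry. -/
theorem injective_one_lipschitz_unit_jacobian_local_isometry
    (n : ℕ) (hn : 1 ≤ n)
    (U : Set (EuclideanSpace ℝ (Fin n))) (hU : IsOpen U)
    (f : EuclideanSpace ℝ (Fin n) → EuclideanSpace ℝ (Fin n))
    (hinj : Set.InjOn f U) (hlip : LipschitzOnWith 1 f U)
    (hjac : ∀ᵐ x ∂(volume.restrict U),
      DifferentiableAt ℝ f x ∧ (fderiv ℝ f x).det = 1) :
    ∀ x ∈ U, ∃ ε : ℝ, 0 < ε ∧ Metric.ball x ε ⊆ U ∧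
      ∀ y ∈ Metric.ball x ε, ∀ z ∈ Metric.ball x ε, ‖f y - f z‖ = ‖y - z‖ := by
  classical
  set G : Set (EuclideanSpace ℝ (Fin n)) :=
    {x | DifferentiableAt ℝ f x ∧ (fderiv ℝ f x).det = 1} with hG
  have hGmeas : MeasurableSet G := by
    apply ((measurableSet_of_differentiableAt ℝ f).inter)
    exact (ContinuousLinearMap.continuous_det.measurable.comp
      (measurable_fderiv ℝ f)) (measurableSet_singleton (1:ℝ))
  have hae : ∀ᵐ x, x ∈ U → x ∈ G :=
    (ae_restrict_iff' hU.measurableSet).1 hjac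
  -- key lemma : for a ball contained in U, the measure of f '' (ball ∩ G) equals that
  -- of the ball, and this image is measurable
  have key : ∀ c : EuclideanSpace ℝ (Fin n), ∀ r : ℝ, Metric.ball c r ⊆ U →
      volume (f '' (Metric.ball c r ∩ G)) = volume (Metric.ball c r) ∧
      MeasurableSet (f '' (Metric.ball c r ∩ G)) := by
    intro c r hsub
    set s := Metric.ball c r ∩ G with hs
    have hsmeas : MeasurableSet s := Metric.isOpen_ball.measurableSet.inter hGmeas
    have hderiv : ∀ x ∈ s, HasFDerivWithinAt f (fderiv ℝ f x) s x := fun x hx =>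
      (hx.2.1.hasFDerivAt).hasFDerivWithinAt
    have hinj' : Set.InjOn f s := hinj.mono (fun x hx => hsub hx.1)
    have hnull : volume (Metric.ball c r \ G) = 0 := by
      refine measure_mono_null (fun x hx => ?_) (ae_iff.1 hae)
      exact fun h => hx.2 (h (hsub hx.1))
    have hsm : volume s = volume (Metric.ball c r) := by
      refine le_antisymm (measure_mono Set.inter_subset_left) ?_
      calc volume (Metric.ball c r) ≤ volume s + volume (Metric.ball c r \ G) := by
            rw [hs]; exact (measure_mono (by simp [Set.inter_union_diff])).trans
              (measure_union_le _ _)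
        _ = volume s := by rw [hnull, add_zero]
    refine ⟨?_, measurable_image_of_fderivWithin hsmeas hderiv hinj'⟩
    have heq := lintegral_abs_det_fderiv_eq_addHaar_image volume hsmeas hderiv hinj'
    have h1 : ∫⁻ x in s, ENNReal.ofReal |(fderiv ℝ f x).det| ∂volume
        = ∫⁻ _x in s, (1 : ENNReal) ∂volume :=
      setLIntegral_congr_fun hsmeas
        (fun x hx => by simp [hx.2.2])
    rw [← heq, h1, ← hsm]
    simp
  intro x hx
  obtain ⟨ε, hε, hball⟩ := Metric.isOpen_iff.1 hU x hx
  refine ⟨ε/2, by positivity, (Metric.ball_subset_ball (by linarith)).trans hball, ?_⟩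
  intro y hy z hz
  by_contra hne
  have hyU : y ∈ U := hball (Metric.ball_subset_ball (by linarith) hy)
  have hzU : z ∈ U := hball (Metric.ball_subset_ball (by linarith) hz)
  have hle : ‖f y - f z‖ ≤ ‖y - z‖ := by
    have := hlip hyU hzU
    simpa [dist_eq_norm] using hlip.dist_le_mul y hyU z hzU
  set d : ℝ := ‖y - z‖ with hd
  set d' : ℝ := ‖f y - f z‖ with hd'
  have hlt : d' < d := lt_of_le_of_ne hle hne
  have hd'0 : 0 ≤ d' := norm_nonneg _
  have hd0 : 0 < d := lt_of_le_of_lt hd'0 hlt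
  set s : ℝ := (d + d') / 4 with hsdef
  have hspos : 0 < s := by positivity
  have hdyz : dist y z = d := by rw [dist_eq_norm]
  have hdle : d < ε := by
    rw [← hdyz]
    calc dist y z ≤ dist y x + dist x z := dist_triangle _ _ _
      _ < ε/2 + ε/2 := by
          exact add_lt_add (Metric.mem_ball.1 hy) (by
            rw [dist_comm]; exact Metric.mem_ball.1 hz)
      _ = ε := by ring
  have hsub_y : Metric.ball y s ⊆ U := by
    refine Set.Subset.trans (fun w hw => ?_) hball
    have : dist w x ≤ dist w y + dist y x := dist_triangle _ _ _
    have h1 : dist w y < s := hw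
    have h2 : dist y x < ε/2 := hy
    have hs2 : s < ε/2 := by
      rw [hsdef]; nlinarith
    exact Metric.mem_ball.2 (by nlinarith [dist_triangle w y x])
  have hsub_z : Metric.ball z s ⊆ U := by
    refine Set.Subset.trans (fun w hw => ?_) hball
    have h1 : dist w z < s := hw
    have h2 : dist z x < ε/2 := Metric.mem_ball.1 hz
    have hs2 : s < ε/2 := by rw [hsdef]; nlinarith
    exact Metric.mem_ball.2 (by nlinarith [dist_triangle w z x])
  obtain ⟨hvy, hmy⟩ := key y s hsub_y
  obtain ⟨hvz, hmz⟩ := key z s hsub_z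
  set Iy := f '' (Metric.ball y s ∩ G) with hIy
  set Iz := f '' (Metric.ball z s ∩ G) with hIz
  -- disjointness of the images
  have hdisj_src : Disjoint (Metric.ball y s) (Metric.ball z s) :=
    Metric.ball_disjoint_ball (by rw [hdyz, hsdef]; linarith)
  have hdisj : Disjoint Iy Iz := by
    rw [Set.disjoint_left]
    rintro a ⟨p, hp, rfl⟩ ⟨q, hq, hpq⟩
    have : q = p := hinj (hsub_z hq.1) (hsub_y hp.1) hpq
    exact Set.disjoint_left.1 hdisj_src hp.1 (this ▸ hq.1)
  -- images land in the corresponding balls around f y, f z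
  have him_y : Iy ⊆ Metric.ball (f y) s := by
    rintro a ⟨p, hp, rfl⟩
    have := hlip (hsub_y hp.1) hyU
    rw [edist_dist, edist_dist] at this
    have h2 : dist (f p) (f y) ≤ dist p y := by
      have := (ENNReal.ofReal_le_ofReal_iff dist_nonneg).1 (by simpa using this)
      linarith
    exact Metric.mem_ball.2 (lt_of_le_of_lt h2 hp.1)
  have him_z : Iz ⊆ Metric.ball (f z) s := by
    rintro a ⟨p, hp, rfl⟩
    have := hlip (hsub_z hp.1) hzU
    rw [edist_dist, edist_dist] at this
    have h2 : dist (f p) (f z) ≤ dist p z := by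
      have := (ENNReal.ofReal_le_ofReal_iff dist_nonneg).1 (by simpa using this)
      linarith
    exact Metric.mem_ball.2 (lt_of_le_of_lt h2 hp.1)
  -- the two target balls intersect in a nonempty open set
  have hint : (Metric.ball (f y) s ∩ Metric.ball (f z) s).Nonempty := by
    refine ⟨midpoint ℝ (f y) (f z), ?_, ?_⟩
    · rw [Metric.mem_ball, dist_midpoint_left]
      rw [← dist_eq_norm] at hd'
      have : dist (f y) (f z) = d' := hd'.symm
      rw [this]
      simp only [Real.norm_ofNat]
      rw [hsdef]; linarith
    · rw [Metric.mem_ball, dist_midpoint_right]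
      rw [← dist_eq_norm] at hd'
      have : dist (f y) (f z) = d' := hd'.symm
      rw [this]
      simp only [Real.norm_ofNat]
      rw [hsdef]; linarith
  have hintpos : 0 < volume (Metric.ball (f y) s ∩ Metric.ball (f z) s) :=
    (Metric.isOpen_ball.inter Metric.isOpen_ball).measure_pos volume hint
  -- measure computations
  have hA : volume (Metric.ball (f y) s ∪ Metric.ball (f z) s)
      + volume (Metric.ball (f y) s ∩ Metric.ball (f z) s)
      = volume (Metric.ball y s) + volume (Metric.ball z s) := by
    rw [measure_union_add_inter _ Metric.isOpen_ball.measurableSet,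
      Measure.addHaar_ball_center volume (f y), Measure.addHaar_ball_center volume (f z),
      Measure.addHaar_ball_center volume y, Measure.addHaar_ball_center volume z]
  have hsum_le : volume (Metric.ball y s) + volume (Metric.ball z s)
      ≤ volume (Metric.ball (f y) s ∪ Metric.ball (f z) s) := by
    calc volume (Metric.ball y s) + volume (Metric.ball z s)
        = volume Iy + volume Iz := by rw [hvy, hvz]
      _ = volume (Iy ∪ Iz) := (measure_union hdisj hmz).symm
      _ ≤ _ := measure_mono (Set.union_subset_union him_y him_z)
  have hfin : volume (Metric.ball (f y) s ∪ Metric.ball (f z) s) ≠ ⊤ :=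
    ne_of_lt (lt_of_le_of_lt (measure_union_le _ _)
      (ENNReal.add_lt_top.2 ⟨measure_ball_lt_top, measure_ball_lt_top⟩))
  have : volume (Metric.ball (f y) s ∪ Metric.ball (f z) s)
      + volume (Metric.ball (f y) s ∩ Metric.ball (f z) s)
      ≤ volume (Metric.ball (f y) s ∪ Metric.ball (f z) s) + 0 := by
    rw [add_zero, hA]; exact hsum_le
  have := (ENNReal.add_le_add_iff_left hfin).1 this
  exact absurd this (by simpa using hintpos.ne')
end
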